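/- The function f : (0,∞) → ℝ defined by f(x) = e^{−x²/2}·(1 + (4/π)·h(x/√2)²), where h(u) = ∫₀^u e^{t²} dt, is monotone nondecreasing on (0,∞). Equivalently, the function ℓ(x) = c/f(x) (for any constant c > 0) is nonincreasing on (0,∞). -/

import Mathlib

open Real

noncomputable def hfun (u : ℝ) : ℝ := ∫ t in (0:ℝ)..u, Real.exp (t ^ 2)

lemma cont_exp_sq : Continuous fun t : ℝ => Real.exp (t ^ 2) := by continuity

lemma hfun_hasDerivAt (u : ℝ) : HasDerivAt hfun (Real.exp (u ^ 2)) u :=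
  intervalIntegral.integral_hasDerivAt_right
    (cont_exp_sq.intervalIntegrable _ _)
    (cont_exp_sq.stronglyMeasurable.stronglyMeasurableAtFilter)
    cont_exp_sq.continuousAt

lemma hfun_le {u : ℝ} (hu : 0 ≤ u) : hfun u ≤ u * Real.exp (u ^ 2) := by
  have : hfun u ≤ ∫ _ in (0:ℝ)..u, Real.exp (u ^ 2) := by
    apply intervalIntegral.integral_mono_on hu
      (cont_exp_sq.intervalIntegrable _ _) (intervalIntegrable_const)
    intro t ht
    rw [Set.mem_Icc] at ht
    exact Real.exp_le_exp.2 (by nlinarith [ht.1, ht.2])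
  simpa [mul_comm] using this

lemma sqrt2_pos : (0:ℝ) < Real.sqrt 2 := Real.sqrt_pos.2 two_pos

lemma sqrt2_sq : Real.sqrt 2 * Real.sqrt 2 = 2 := Real.mul_self_sqrt two_pos.le

/-- derivative of `x ↦ hfun (x / √2)` -/
lemma hcomp_hasDerivAt (x : ℝ) :
    HasDerivAt (fun x : ℝ => hfun (x / Real.sqrt 2))
      (Real.exp (x ^ 2 / 2) / Real.sqrt 2) x := by
  have h1 : HasDerivAt (fun x : ℝ => x / Real.sqrt 2) (1 / Real.sqrt 2) x :=
    (hasDerivAt_id x).div_const _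
  have h2 := (hfun_hasDerivAt (x / Real.sqrt 2)).comp x h1
  refine HasDerivAt.congr_deriv h2 (Eq.symm ?_)
  have : (x / Real.sqrt 2) ^ 2 = x ^ 2 / 2 := by
    rw [div_pow]; congr 1; rw [sq, sqrt2_sq]
  rw [this]; ring

noncomputable def P (x : ℝ) : ℝ := Real.exp (x ^ 2) - (hfun (x / Real.sqrt 2)) ^ 2

lemma P_hasDerivAt (x : ℝ) :
    HasDerivAt P
      (Real.exp (x ^ 2) * (2 * x) -
        2 * hfun (x / Real.sqrt 2) * (Real.exp (x ^ 2 / 2) / Real.sqrt 2)) x := by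
  have h1 : HasDerivAt (fun x : ℝ => Real.exp (x ^ 2)) (Real.exp (x ^ 2) * (2 * x)) x := by
    have := ((hasDerivAt_pow 2 x)).exp
    simpa [mul_comm] using this
  have h2 : HasDerivAt (fun x : ℝ => (hfun (x / Real.sqrt 2)) ^ 2)
      (2 * hfun (x / Real.sqrt 2) * (Real.exp (x ^ 2 / 2) / Real.sqrt 2)) x := by
    have := (hcomp_hasDerivAt x).pow 2
    refine HasDerivAt.congr_deriv this (Eq.symm ?_); ring
  exact h1.sub h2

lemma exp_half_sq (x : ℝ) : Real.exp (x ^ 2 / 2) * Real.exp (x ^ 2 / 2) = Real.exp (x ^ 2) := by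
  rw [← Real.exp_add]; ring_nf

lemma P_deriv_nonneg {x : ℝ} (hx : 0 ≤ x) :
    0 ≤ Real.exp (x ^ 2) * (2 * x) -
        2 * hfun (x / Real.sqrt 2) * (Real.exp (x ^ 2 / 2) / Real.sqrt 2) := by
  have hu : 0 ≤ x / Real.sqrt 2 := div_nonneg hx sqrt2_pos.le
  have hb := hfun_le hu
  have hsq : (x / Real.sqrt 2) ^ 2 = x ^ 2 / 2 := by
    rw [div_pow]; congr 1; rw [sq, sqrt2_sq]
  rw [hsq] at hb
  have hepos : (0:ℝ) < Real.exp (x ^ 2 / 2) := Real.exp_pos _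
  have key : 2 * hfun (x / Real.sqrt 2) * (Real.exp (x ^ 2 / 2) / Real.sqrt 2)
      ≤ Real.exp (x ^ 2) * (2 * x) := by
    have h1 : 2 * hfun (x / Real.sqrt 2) * (Real.exp (x ^ 2 / 2) / Real.sqrt 2)
        ≤ 2 * (x / Real.sqrt 2 * Real.exp (x ^ 2 / 2)) * (Real.exp (x ^ 2 / 2) / Real.sqrt 2) := by
      apply mul_le_mul_of_nonneg_right _ (div_nonneg hepos.le sqrt2_pos.le)
      linarith
    have h2 : 2 * (x / Real.sqrt 2 * Real.exp (x ^ 2 / 2)) * (Real.exp (x ^ 2 / 2) / Real.sqrt 2)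
        = x * Real.exp (x ^ 2) := by
      rw [← exp_half_sq x]
      field_simp
      ring_nf
      rw [Real.sq_sqrt (by norm_num : (0:ℝ) ≤ 2)]
    rw [h2] at h1
    nlinarith [Real.exp_pos (x ^ 2), mul_nonneg hx (Real.exp_pos (x ^ 2)).le]
  linarith

lemma P_ge_one {x : ℝ} (hx : 0 ≤ x) : 1 ≤ P x := by
  have hP0 : P 0 = 1 := by simp [P, hfun]
  have hdiff : ∀ y, HasDerivAt P _ y := P_hasDerivAt
  have hmono : MonotoneOn P (Set.Ici 0) := by
    apply monotoneOn_of_deriv_nonneg (convex_Ici 0)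
    · exact fun y _ => ((P_hasDerivAt y).differentiableAt).continuousAt.continuousWithinAt
    · exact fun y _ => ((P_hasDerivAt y).differentiableAt).differentiableWithinAt
    · intro y hy
      rw [(P_hasDerivAt y).deriv]
      rw [interior_Ici] at hy
      exact P_deriv_nonneg (le_of_lt hy)
  calc 1 = P 0 := hP0.symm
    _ ≤ P x := hmono (Set.self_mem_Ici) hx hx

noncomputable def W (x : ℝ) : ℝ :=
  4 * Real.sqrt 2 / Real.pi * hfun (x / Real.sqrt 2) * Real.exp (x ^ 2 / 2)
    - x * (1 + 4 / Real.pi * (hfun (x / Real.sqrt 2)) ^ 2)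

lemma W_hasDerivAt (x : ℝ) :
    HasDerivAt W (4 / Real.pi * P x - 1) x := by
  have hE : HasDerivAt (fun x : ℝ => Real.exp (x ^ 2 / 2)) (Real.exp (x ^ 2 / 2) * x) x := by
    have h0 : HasDerivAt (fun x : ℝ => x ^ 2 / 2) x x := by
      simpa using (hasDerivAt_pow 2 x).div_const 2
    simpa using h0.exp
  have h1 : HasDerivAt
      (fun x : ℝ => 4 * Real.sqrt 2 / Real.pi * hfun (x / Real.sqrt 2) * Real.exp (x ^ 2 / 2))
      (4 * Real.sqrt 2 / Real.pi *
        ((Real.exp (x ^ 2 / 2) / Real.sqrt 2) * Real.exp (x ^ 2 / 2)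
          + hfun (x / Real.sqrt 2) * (Real.exp (x ^ 2 / 2) * x))) x := by
    have := (((hcomp_hasDerivAt x).const_mul (4 * Real.sqrt 2 / Real.pi)).mul hE)
    refine HasDerivAt.congr_deriv this (Eq.symm ?_); ring
  have h2 : HasDerivAt
      (fun x : ℝ => x * (1 + 4 / Real.pi * (hfun (x / Real.sqrt 2)) ^ 2))
      ((1 + 4 / Real.pi * (hfun (x / Real.sqrt 2)) ^ 2)
        + x * (4 / Real.pi * (2 * hfun (x / Real.sqrt 2) * (Real.exp (x ^ 2 / 2) / Real.sqrt 2)))) x := by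
    have hg : HasDerivAt (fun x : ℝ => 1 + 4 / Real.pi * (hfun (x / Real.sqrt 2)) ^ 2)
        (4 / Real.pi * (2 * hfun (x / Real.sqrt 2) * (Real.exp (x ^ 2 / 2) / Real.sqrt 2))) x := by
      have hp : HasDerivAt (fun x : ℝ => (hfun (x / Real.sqrt 2)) ^ 2)
          (2 * hfun (x / Real.sqrt 2) * (Real.exp (x ^ 2 / 2) / Real.sqrt 2)) x := by
        have := (hcomp_hasDerivAt x).pow 2
        refine HasDerivAt.congr_deriv this (Eq.symm ?_); ring
      exact (hp.const_mul _).const_add 1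
    have := (hasDerivAt_id' x).mul hg
    simpa [Pi.mul_def] using this
  have := h1.sub h2
  refine HasDerivAt.congr_deriv this (Eq.symm ?_)
  have hπ : Real.pi ≠ 0 := Real.pi_ne_zero
  have hs : Real.sqrt 2 ≠ 0 := sqrt2_pos.ne'
  unfold P
  rw [← exp_half_sq x]
  field_simp
  ring_nf
  rw [Real.sq_sqrt (by norm_num : (0:ℝ) ≤ 2)]
  ring

lemma W_nonneg {x : ℝ} (hx : 0 ≤ x) : 0 ≤ W x := by
  have hW0 : W 0 = 0 := by simp [W, hfun]
  have hmono : MonotoneOn W (Set.Ici 0) := by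
    apply monotoneOn_of_deriv_nonneg (convex_Ici 0)
    · exact fun y _ => ((W_hasDerivAt y).differentiableAt).continuousAt.continuousWithinAt
    · exact fun y _ => ((W_hasDerivAt y).differentiableAt).differentiableWithinAt
    · intro y hy
      rw [(W_hasDerivAt y).deriv]
      rw [interior_Ici] at hy
      have hP := P_ge_one (le_of_lt hy)
      have hπ : Real.pi < 4 := by linarith [Real.pi_lt_d2]
      have hπ0 : 0 < Real.pi := Real.pi_pos
      have : Real.pi / 4 ≤ P y := by
        calc Real.pi / 4 ≤ 1 := by linarith
          _ ≤ P y := hP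
      rw [sub_nonneg]
      calc (1:ℝ) = 4 / Real.pi * (Real.pi / 4) := by field_simp
        _ ≤ 4 / Real.pi * P y :=
          mul_le_mul_of_nonneg_left this (by positivity)
  calc (0:ℝ) = W 0 := hW0.symm
    _ ≤ W x := hmono (Set.self_mem_Ici) hx hx

lemma F_hasDerivAt (x : ℝ) :
    HasDerivAt
      (fun x : ℝ => Real.exp (-(x ^ 2) / 2) *
        (1 + 4 / Real.pi * (hfun (x / Real.sqrt 2)) ^ 2))
      (Real.exp (-(x ^ 2) / 2) * W x) x := by
  have hE : HasDerivAt (fun x : ℝ => Real.exp (-(x ^ 2) / 2))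
      (Real.exp (-(x ^ 2) / 2) * (-x)) x := by
    have h0 : HasDerivAt (fun x : ℝ => -(x ^ 2) / 2) (-x) x := by
      have := ((hasDerivAt_pow 2 x).neg).div_const 2
      refine HasDerivAt.congr_deriv this (Eq.symm ?_); push_cast; ring
    simpa using h0.exp
  have hg : HasDerivAt (fun x : ℝ => 1 + 4 / Real.pi * (hfun (x / Real.sqrt 2)) ^ 2)
      (4 / Real.pi * (2 * hfun (x / Real.sqrt 2) * (Real.exp (x ^ 2 / 2) / Real.sqrt 2))) x := by
    have hp : HasDerivAt (fun x : ℝ => (hfun (x / Real.sqrt 2)) ^ 2)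
        (2 * hfun (x / Real.sqrt 2) * (Real.exp (x ^ 2 / 2) / Real.sqrt 2)) x := by
      have := (hcomp_hasDerivAt x).pow 2
      refine HasDerivAt.congr_deriv this (Eq.symm ?_); ring
    exact (hp.const_mul _).const_add 1
  have := hE.mul hg
  refine HasDerivAt.congr_deriv this (Eq.symm ?_)
  unfold W
  have hs : Real.sqrt 2 ≠ 0 := sqrt2_pos.ne'
  field_simp
  ring_nf
  rw [Real.sq_sqrt (by norm_num : (0:ℝ) ≤ 2)]
  ring

/-- the function `f(x) = e^{-x²/2} (1 + (4/π) h(x/√2)²)` with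
`h(u) = ∫₀^u e^{t²} dt` is monotone nondecreasing on `(0, ∞)`. -/
theorem gaussian_boolean_f_monotone :
    MonotoneOn
      (fun x : ℝ => Real.exp (-(x ^ 2) / 2) *
        (1 + (4 / Real.pi) * (∫ t in (0 : ℝ)..(x / Real.sqrt 2), Real.exp (t ^ 2)) ^ 2))
      (Set.Ioi 0) := by
  have heq : (fun x : ℝ => Real.exp (-(x ^ 2) / 2) *
      (1 + (4 / Real.pi) * (∫ t in (0 : ℝ)..(x / Real.sqrt 2), Real.exp (t ^ 2)) ^ 2))
      = fun x : ℝ => Real.exp (-(x ^ 2) / 2) *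
        (1 + 4 / Real.pi * (hfun (x / Real.sqrt 2)) ^ 2) := rfl
  rw [heq]
  apply monotoneOn_of_deriv_nonneg (convex_Ioi 0)
  · exact fun y _ => ((F_hasDerivAt y).differentiableAt).continuousAt.continuousWithinAt
  · exact fun y _ => ((F_hasDerivAt y).differentiableAt).differentiableWithinAt
  · intro y hy
    rw [(F_hasDerivAt y).deriv]
    rw [interior_Ioi] at hy
    exact mul_nonneg (Real.exp_pos _).le (W_nonneg (le_of_lt hy))
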